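/- Every binary word of length at least 1 is 2-abelian equivalent to a word of the form a a^k b^l (ab)^m a^n or b b^k a^l (ba)^m b^n with k, l, m ≥ 0 and n ∈ {0,1}. -/

import Mathlib

/-- Number of occurrences of `w` as a factor (contiguous subword) of `u`. -/
def countOcc {α : Type*} [DecidableEq α] (w u : List α) : ℕ :=
  u.tails.countP (fun t => w.isPrefixOf t)

/-- `k`-abelian equivalence: same prefix and suffix of length `k-1`
(truncated to the words' lengths) and same number of occurrences of
every factor of length `k`. -/
def KAbEq {α : Type*} [DecidableEq α] (k : ℕ) (u v : List α) : Prop :=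
  u.take (k - 1) = v.take (k - 1) ∧
  u.drop (u.length - (k - 1)) = v.drop (v.length - (k - 1)) ∧
  ∀ w : List α, w.length = k → countOcc w u = countOcc w v

namespace TwoAb

lemma countOcc_pair_nil {α : Type*} [DecidableEq α] (x y : α) : countOcc [x,y] [] = 0 := by
  simp [countOcc, List.isPrefixOf]

lemma countOcc_pair_cons {α : Type*} [DecidableEq α] (x y c : α) (u : List α) :
    countOcc [x,y] (c :: u) = countOcc [x,y] u + (if c = x ∧ u.head? = some y then 1 else 0) := by
  unfold countOcc
  rw [List.tails_cons, List.countP_cons]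
  congr 1
  cases u with
  | nil => simp [List.isPrefixOf]
  | cons d t =>
    simp only [List.isPrefixOf, List.head?, Bool.and_eq_true, decide_eq_true_eq,
      Option.some.injEq]
    have h : ((x == c) = true ∧ (y == d) = true ∧ True) ↔ (c = x ∧ d = y) := by
      constructor
      · rintro ⟨h1, h2, -⟩
        exact ⟨(beq_iff_eq.mp h1).symm, (beq_iff_eq.mp h2).symm⟩
      · rintro ⟨h1, h2⟩
        exact ⟨beq_iff_eq.mpr h1.symm, beq_iff_eq.mpr h2.symm, trivial⟩
    rw [if_congr h rfl rfl]

lemma countOcc_pair_append {α : Type*} [DecidableEq α] (x y : α) (u v : List α) :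
    countOcc [x,y] (u ++ v) = countOcc [x,y] u + countOcc [x,y] v +
      (if u.getLast? = some x ∧ v.head? = some y then 1 else 0) := by
  induction u with
  | nil => simp [countOcc_pair_nil]
  | cons c t ih =>
    rw [List.cons_append, countOcc_pair_cons, ih, countOcc_pair_cons]
    cases t with
    | nil => simp [countOcc_pair_nil]
    | cons d t' =>
      have hor : (some d).or v.head? = some d := rfl
      simp only [List.getLast?_cons_cons, List.head?_append, List.head?_cons, hor]
      abel

lemma take_one_eq {α : Type*} (u : List α) : u.take 1 = u.head?.toList := by
  cases u <;> simp

lemma drop_len_sub_one {α : Type*} (u : List α) :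
    u.drop (u.length - 1) = u.getLast?.toList := by
  induction u with
  | nil => simp
  | cons c t ih =>
    cases t with
    | nil => simp
    | cons d t' =>
      have h : (c :: d :: t').length - 1 = ((d :: t').length - 1) + 1 := by
        simp [List.length_cons]
      rw [h, List.drop_succ_cons, ih, List.getLast?_cons_cons]

lemma count_dropLast {α : Type*} [DecidableEq α] (u : List α) (x : α) :
    u.count x = u.dropLast.count x + (if u.getLast? = some x then 1 else 0) := by
  induction u with
  | nil => simp
  | cons c t ih =>
    cases t with
    | nil => simp [List.count_cons]
    | cons d t' =>
      rw [List.count_cons, ih, List.getLast?_cons_cons, List.dropLast_cons₂, List.count_cons]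
      ring

lemma count_head {α : Type*} [DecidableEq α] (u : List α) (y : α) :
    u.count y = u.tail.count y + (if u.head? = some y then 1 else 0) := by
  cases u with
  | nil => simp
  | cons c t => simp [List.count_cons]

lemma fin2_ne_cases : ∀ (a b c : Fin 2), a ≠ b → c = a ∨ c = b := by decide

variable {a b : Fin 2}

lemma L1 (hab : a ≠ b) (u : List (Fin 2)) (x : Fin 2) :
    countOcc [x,a] u + countOcc [x,b] u = u.dropLast.count x := by
  induction u with
  | nil => simp [countOcc_pair_nil]
  | cons c t ih =>
    cases t with
    | nil => simp [countOcc_pair_cons, countOcc_pair_nil]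
    | cons d t' =>
      rw [countOcc_pair_cons x a c, countOcc_pair_cons x b c, List.dropLast_cons₂, List.count_cons]
      simp only [beq_iff_eq]
      have key : (if c = x ∧ (d :: t').head? = some a then 1 else 0) +
          (if c = x ∧ (d :: t').head? = some b then 1 else 0) =
          (if c = x then 1 else 0) := by
        rcases fin2_ne_cases a b d hab with rfl | rfl <;>
          by_cases hcx : c = x <;> simp [hcx, hab, Ne.symm hab]
      omega

lemma L2 (hab : a ≠ b) (u : List (Fin 2)) (y : Fin 2) :
    countOcc [a,y] u + countOcc [b,y] u = u.tail.count y := by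
  induction u with
  | nil => simp [countOcc_pair_nil]
  | cons c t ih =>
    rw [countOcc_pair_cons a y c t, countOcc_pair_cons b y c t, List.tail_cons, count_head t y]
    have key : (if c = a ∧ t.head? = some y then 1 else 0) +
        (if c = b ∧ t.head? = some y then 1 else 0) =
        (if t.head? = some y then 1 else 0) := by
      rcases fin2_ne_cases a b c hab with rfl | rfl <;>
        by_cases hP : t.head? = some y <;> simp [hP, hab, Ne.symm hab]
    omega

lemma eqL1 (hab : a ≠ b) (u : List (Fin 2)) (x : Fin 2) :
    countOcc [x,a] u + countOcc [x,b] u + (if u.getLast? = some x then 1 else 0)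
      = u.count x := by
  rw [L1 hab, ← count_dropLast]

lemma eqL2 (hab : a ≠ b) (u : List (Fin 2)) (y : Fin 2) :
    countOcc [a,y] u + countOcc [b,y] u + (if u.head? = some y then 1 else 0)
      = u.count y := by
  rw [L2 hab, ← count_head]

lemma kabeq_of_stats {u v : List (Fin 2)} (hab : a ≠ b)
    (h1 : u.head? = v.head?) (h2 : u.getLast? = v.getLast?)
    (h3 : u.count a = v.count a) (h4 : u.count b = v.count b)
    (h5 : countOcc [b,a] u = countOcc [b,a] v) : KAbEq 2 u v := by
  refine ⟨?_, ?_, ?_⟩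
  · rw [show (2:ℕ) - 1 = 1 from rfl, take_one_eq, take_one_eq, h1]
  · rw [show (2:ℕ) - 1 = 1 from rfl, drop_len_sub_one, drop_len_sub_one, h2]
  · intro p hp
    obtain ⟨x, y, rfl⟩ : ∃ x y, p = [x, y] := by
      rcases p with _ | ⟨x, _ | ⟨y, _ | ⟨z, t⟩⟩⟩ <;> simp at hp
      exact ⟨x, y, rfl⟩
    · have E1a := eqL1 hab u a; have E1b := eqL1 hab u b
      have E2a := eqL2 hab u a; have E2b := eqL2 hab u b
      have F1a := eqL1 hab v a; have F1b := eqL1 hab v b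
      have F2a := eqL2 hab v a; have F2b := eqL2 hab v b
      rw [h2] at E1a E1b
      rw [h1] at E2a E2b
      rw [h3] at E1a E2a
      rw [h4] at E1b E2b
      rcases fin2_ne_cases a b x hab with hx | hx <;>
        rcases fin2_ne_cases a b y hab with hy | hy <;> rw [hx, hy] <;> omega

end TwoAb

namespace TwoAb

lemma occ_rep_ne1 {α : Type*} [DecidableEq α] (x y c : α) (h : x ≠ c) (K : ℕ) :
    countOcc [x,y] (List.replicate K c) = 0 := by
  induction K with
  | zero => simp [countOcc_pair_nil]
  | succ K ih =>
    rw [List.replicate_succ, countOcc_pair_cons, ih]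
    simp [Ne.symm h]

lemma occ_rep_ne2 {α : Type*} [DecidableEq α] (x y c : α) (h : y ≠ c) (K : ℕ) :
    countOcc [x,y] (List.replicate K c) = 0 := by
  induction K with
  | zero => simp [countOcc_pair_nil]
  | succ K ih =>
    rw [List.replicate_succ, countOcc_pair_cons, ih, List.head?_replicate]
    have hx : ¬ (c = x ∧ (if K = 0 then (none : Option α) else some c) = some y) := by
      by_cases h0 : K = 0 <;> simp [h0, Ne.symm h]
    rw [if_neg hx]

variable {a b : Fin 2}

lemma flatten_succ (m : ℕ) :
    (List.replicate (m+1) [a,b]).flatten = a :: b :: (List.replicate m [a,b]).flatten := by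
  rw [List.replicate_succ, List.flatten_cons]
  rfl

lemma head?_f (m : ℕ) : ((List.replicate (m+1) [a,b]).flatten).head? = some a := by
  rw [flatten_succ]
  rfl

lemma getLast?_f (m : ℕ) : ((List.replicate (m+1) [a,b]).flatten).getLast? = some b := by
  induction m with
  | zero => rfl
  | succ m ih =>
    rw [List.replicate_succ, List.flatten_cons, List.getLast?_append, ih]
    rfl

lemma count_f_a (hab : a ≠ b) (m : ℕ) : ((List.replicate m [a,b]).flatten).count a = m := by
  induction m with
  | zero => simp
  | succ m ih =>
    rw [List.replicate_succ, List.flatten_cons, List.count_append, ih]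
    simp [List.count_cons, hab, Ne.symm hab]
    omega

lemma count_f_b (hab : a ≠ b) (m : ℕ) : ((List.replicate m [a,b]).flatten).count b = m := by
  induction m with
  | zero => simp
  | succ m ih =>
    rw [List.replicate_succ, List.flatten_cons, List.count_append, ih]
    simp [List.count_cons, hab, Ne.symm hab]
    omega

lemma occ_ba_f (hab : a ≠ b) (m : ℕ) :
    countOcc [b,a] ((List.replicate m [a,b]).flatten) = m - 1 := by
  induction m with
  | zero => simp [countOcc_pair_nil]
  | succ m ih =>
    rw [flatten_succ, countOcc_pair_cons b a a, countOcc_pair_cons b a b, ih]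
    cases m with
    | zero => simp [hab]
    | succ m' =>
      rw [head?_f]
      simp [hab]

lemma count_V_a (hab : a ≠ b) (K l m n : ℕ) :
    (List.replicate K a ++ List.replicate l b ++ (List.replicate m [a,b]).flatten ++
      List.replicate n a).count a = K + m + n := by
  simp [List.count_append, List.count_replicate, count_f_a hab, Ne.symm hab]
  omega

lemma count_V_b (hab : a ≠ b) (K l m n : ℕ) :
    (List.replicate K a ++ List.replicate l b ++ (List.replicate m [a,b]).flatten ++
      List.replicate n a).count b = l + m := by
  simp [List.count_append, List.count_replicate, count_f_b hab, hab]

lemma getLast?_V (K l m n : ℕ) (hl : 1 ≤ l) :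
    (List.replicate K a ++ List.replicate l b ++ (List.replicate m [a,b]).flatten ++
      List.replicate n a).getLast? = if n = 0 then some b else some a := by
  obtain ⟨l', rfl⟩ : ∃ l', l = l' + 1 := ⟨l - 1, by omega⟩
  rcases n with _ | n <;> rcases m with _ | m <;>
    simp [List.getLast?_append, List.getLast?_replicate, getLast?_f]

lemma occ_ba_V (hab : a ≠ b) (K l m n : ℕ) (hl : 1 ≤ l) :
    countOcc [b,a] (List.replicate K a ++ List.replicate l b ++
      (List.replicate m [a,b]).flatten ++ List.replicate n a)
      = m + (if n = 0 then 0 else 1) := by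
  obtain ⟨l', rfl⟩ : ∃ l', l = l' + 1 := ⟨l - 1, by omega⟩
  rcases n with _ | n <;> rcases m with _ | m <;>
    simp [countOcc_pair_append, countOcc_pair_nil, occ_rep_ne1 b a a (Ne.symm hab),
      occ_rep_ne2 b a b hab, occ_ba_f hab, hab, Ne.symm hab,
      List.getLast?_append, List.getLast?_replicate, List.head?_replicate,
      getLast?_f, head?_f] <;> omega

end TwoAb

namespace TwoAb

lemma count_eq_zero_of_no_ba {a b : Fin 2} (hab : a ≠ b) :
    ∀ u : List (Fin 2), countOcc [b,a] u = 0 → u.getLast? = some a → u.count b = 0 := by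
  intro u
  induction u with
  | nil => intro _ _; simp
  | cons c t ih =>
    intro h0 hl
    cases t with
    | nil =>
      simp only [List.getLast?_singleton, Option.some.injEq] at hl
      subst hl
      simp [List.count_cons, hab]
    | cons d t' =>
      rw [List.getLast?_cons_cons] at hl
      rw [countOcc_pair_cons] at h0
      have h0' : countOcc [b,a] (d :: t') = 0 := by omega
      have hcnt := ih h0' hl
      have hd : d ≠ b := by
        intro hdb
        rw [List.count_cons] at hcnt
        simp [hdb] at hcnt
      have hda : d = a := by
        rcases fin2_ne_cases a b d hab with h | h
        · exact h
        · exact absurd h hd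
      have hc : c ≠ b := by
        intro hcb
        have : (if c = b ∧ (d :: t').head? = some a then 1 else 0) = 0 := by omega
        rw [if_pos ⟨hcb, by simp [hda]⟩] at this
        exact one_ne_zero this
      rw [List.count_cons, hcnt]
      simp [hc]

lemma main (a b : Fin 2) (hab : a ≠ b) (w : List (Fin 2)) (hh : w.head? = some a) :
    ∃ k l m n : ℕ, n ≤ 1 ∧ KAbEq 2 w
      (a :: (List.replicate k a ++ List.replicate l b ++
        (List.replicate m [a,b]).flatten ++ List.replicate n a)) := by
  have hw : w ≠ [] := by rintro rfl; simp at hh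
  obtain ⟨c, hc⟩ : ∃ c, w.getLast? = some c :=
    Option.isSome_iff_exists.mp (List.getLast?_isSome.mpr hw)
  have q1 := eqL2 hab w a
  rw [hh, if_pos rfl] at q1
  have q2 := eqL1 hab w b
  rw [hc] at q2
  rcases fin2_ne_cases a b c hab with hcc | hcc
  · -- last letter is a
    rw [hcc] at hc q2
    rw [if_neg (by simp [hab] : ¬ (some (a:Fin 2) : Option (Fin 2)) = some b)] at q2
    by_cases hs0 : countOcc [b,a] w = 0
    · have hB0 : w.count b = 0 := count_eq_zero_of_no_ba hab w hs0 hc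
      refine ⟨w.count a - 1, 0, 0, 0, by norm_num, ?_⟩
      show KAbEq 2 w (List.replicate (w.count a - 1 + 1) a ++ List.replicate 0 b ++
        (List.replicate 0 [a,b]).flatten ++ List.replicate 0 a)
      apply kabeq_of_stats hab
      · rw [hh]; rfl
      · rw [hc]
        simp [List.getLast?_append, List.getLast?_replicate]
      · rw [count_V_a hab]; omega
      · rw [count_V_b hab]; omega
      · rw [hs0]
        simp [occ_rep_ne1 b a a (Ne.symm hab), countOcc_pair_nil]
    · have hsB : countOcc [b,a] w ≤ w.count b := by omega
      have hsA : countOcc [b,a] w + 1 ≤ w.count a := by omega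
      have hs1 : 1 ≤ countOcc [b,a] w := by omega
      refine ⟨w.count a - 1 - countOcc [b,a] w, w.count b + 1 - countOcc [b,a] w,
        countOcc [b,a] w - 1, 1, le_refl 1, ?_⟩
      show KAbEq 2 w (List.replicate (w.count a - 1 - countOcc [b,a] w + 1) a ++
        List.replicate (w.count b + 1 - countOcc [b,a] w) b ++
        (List.replicate (countOcc [b,a] w - 1) [a,b]).flatten ++ List.replicate 1 a)
      apply kabeq_of_stats hab
      · rw [hh]; rfl
      · rw [hc, getLast?_V _ _ _ _ (by omega)]
        simp
      · rw [count_V_a hab]; omega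
      · rw [count_V_b hab]; omega
      · rw [occ_ba_V hab _ _ _ _ (by omega)]
        simp
        omega
  · -- last letter is b
    rw [hcc] at hc q2
    rw [if_pos rfl] at q2
    have hsA : countOcc [b,a] w + 1 ≤ w.count a := by omega
    have hsB : countOcc [b,a] w + 1 ≤ w.count b := by omega
    refine ⟨w.count a - 1 - countOcc [b,a] w, w.count b - countOcc [b,a] w,
      countOcc [b,a] w, 0, by norm_num, ?_⟩
    show KAbEq 2 w (List.replicate (w.count a - 1 - countOcc [b,a] w + 1) a ++
      List.replicate (w.count b - countOcc [b,a] w) b ++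
      (List.replicate (countOcc [b,a] w) [a,b]).flatten ++ List.replicate 0 a)
    apply kabeq_of_stats hab
    · rw [hh]; rfl
    · rw [hc, getLast?_V _ _ _ _ (by omega)]
      simp
    · rw [count_V_a hab]; omega
    · rw [count_V_b hab]; omega
    · rw [occ_ba_V hab _ _ _ _ (by omega)]
      simp

end TwoAb


/-- every nonempty binary word is 2-abelian equivalent to a word of
the form a a^k b^l (ab)^m a^n or b b^k a^l (ba)^m b^n with n ∈ {0,1}
(here a = 0, b = 1). -/
theorem twoAbelian_normal_form (w : List (Fin 2)) (hw : w ≠ []) :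
    ∃ k l m n : ℕ, n ≤ 1 ∧
      (KAbEq 2 w (0 :: (List.replicate k (0 : Fin 2) ++ List.replicate l 1 ++
          (List.replicate m [(0 : Fin 2), 1]).flatten ++ List.replicate n 0)) ∨
       KAbEq 2 w (1 :: (List.replicate k (1 : Fin 2) ++ List.replicate l 0 ++
          (List.replicate m [(1 : Fin 2), 0]).flatten ++ List.replicate n 1))) := by
  obtain ⟨c, hc⟩ : ∃ c, w.head? = some c := by
    cases w with
    | nil => exact absurd rfl hw
    | cons x t => exact ⟨x, rfl⟩
  rcases TwoAb.fin2_ne_cases 0 1 c (by decide) with h | h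
  · rw [h] at hc
    obtain ⟨k, l, m, n, hn, hk⟩ := TwoAb.main 0 1 (by decide) w hc
    exact ⟨k, l, m, n, hn, Or.inl hk⟩
  · rw [h] at hc
    obtain ⟨k, l, m, n, hn, hk⟩ := TwoAb.main 1 0 (by decide) w hc
    exact ⟨k, l, m, n, hn, Or.inr hk⟩
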